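/- Any orthogonal set Λ for the unit square [−1/2,1/2]² in ℝ² can be embedded as a subset of a spectrum of the unit square; in particular, any maximal orthogonal set for the unit square is a spectrum. -/

import Mathlib

open MeasureTheory Real

/-- An orthogonal set for the unit square: distinct elements differ by a
nonzero integer in some coordinate. -/
def IsOrthoSq (Λ : Set (ℝ × ℝ)) : Prop :=
  ∀ l ∈ Λ, ∀ m ∈ Λ, l ≠ m →
    (∃ k : ℤ, k ≠ 0 ∧ l.1 - m.1 = (k : ℝ)) ∨ (∃ k : ℤ, k ≠ 0 ∧ l.2 - m.2 = (k : ℝ))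

/-- The unit square `[-1/2,1/2]²`. -/
noncomputable def Qsq : Set (ℝ × ℝ) :=
  Set.Icc (-(1:ℝ)/2) (1/2) ×ˢ Set.Icc (-(1:ℝ)/2) (1/2)

/-- `Γ` is a spectrum of the unit square: the exponentials `e^{2πi⟨γ,x⟩}`, `γ ∈ Γ`,
form an orthogonal and complete system in `L²(Qsq)`. -/
def IsSpectrumSq (Γ : Set (ℝ × ℝ)) : Prop :=
  IsOrthoSq Γ ∧
    ∀ f : ℝ × ℝ → ℂ, MemLp f 2 (volume.restrict Qsq) →
      (∀ l ∈ Γ, (∫ x in Qsq,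
        f x * Complex.exp (-(2 * π * Complex.I) * (l.1 * x.1 + l.2 * x.2))) = 0) →
      f =ᵐ[volume.restrict Qsq] 0

open Set

noncomputable def I1 : Set ℝ := Set.Ioc (-(1:ℝ)/2) (1/2)
noncomputable def μ1 : Measure ℝ := volume.restrict I1

lemma I1_eq : I1 = Set.Ioc (-(1:ℝ)/2) (-(1:ℝ)/2 + 1) := by
  unfold I1; norm_num

instance : Fact ((0:ℝ) < 1) := ⟨one_pos⟩

instance : IsProbabilityMeasure μ1 := by
  constructor
  rw [μ1, Measure.restrict_apply_univ, I1, Real.volume_Ioc]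
  norm_num

lemma mp_mk : MeasurePreserving (((↑) : ℝ → AddCircle (1:ℝ))) μ1 volume := by
  have := AddCircle.measurePreserving_mk (1:ℝ) (-(1:ℝ)/2)
  rwa [← I1_eq] at this

lemma key_unique (g : ℝ → ℂ) (hg : MemLp g 2 μ1)
    (h : ∀ k : ℤ, ∫ x in I1, fourier (-k) (x : AddCircle (1:ℝ)) * g x = 0) :
    g =ᵐ[μ1] 0 := by
  -- strongly measurable representative
  set g' : ℝ → ℂ := hg.aestronglyMeasurable.mk g with hg'def
  have hg'sm : StronglyMeasurable g' := hg.aestronglyMeasurable.stronglyMeasurable_mk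
  have hgg' : g =ᵐ[μ1] g' := hg.aestronglyMeasurable.ae_eq_mk
  have hg' : MemLp g' 2 μ1 := hg.ae_eq hgg'
  have h' : ∀ k : ℤ, ∫ x in I1, fourier (-k) (x : AddCircle (1:ℝ)) * g' x = 0 := by
    intro k
    rw [← h k]
    refine integral_congr_ae ?_
    filter_upwards [hgg'] with x hx
    rw [hx]
  suffices hs : g' =ᵐ[μ1] 0 by exact hgg'.trans hs
  -- lift to the circle
  set G : AddCircle (1:ℝ) → ℂ := AddCircle.liftIoc 1 (-(1:ℝ)/2) g' with hGdef
  have hGg' : ∀ x ∈ I1, G ↑x = g' x := by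
    intro x hx
    apply AddCircle.liftIoc_coe_apply
    rw [← I1_eq]; exact hx
  have hGcomp : (fun x : ℝ => G ↑x) =ᵐ[μ1] g' := by
    filter_upwards [ae_restrict_mem (measurableSet_Ioc (a := -(1:ℝ)/2) (b := 1/2))] with x hx
    exact hGg' x hx
  have hGm : Measurable G := by
    have h1 : Measurable (fun z : AddCircle (1:ℝ) =>
        ((AddCircle.equivIoc 1 (-(1:ℝ)/2) z : Ioc (-(1:ℝ)/2) (-(1:ℝ)/2 + 1)) : ℝ)) :=
      measurable_subtype_coe.comp (AddCircle.measurableEquivIoc 1 (-(1:ℝ)/2)).measurable_toFun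
    exact hg'sm.measurable.comp h1
  have hmk : Measurable (((↑) : ℝ → AddCircle (1:ℝ))) := AddCircle.measurable_mk'
  have hGmem : MemLp G 2 (volume : Measure (AddCircle (1:ℝ))) := by
    rw [← mp_mk.map_eq]
    refine (memLp_map_measure_iff ?_ hmk.aemeasurable).mpr ?_
    · rw [mp_mk.map_eq]; exact hGm.aestronglyMeasurable
    · exact hg'.ae_eq hGcomp.symm
  -- pass to haarAddCircle
  have hvol : (volume : Measure (AddCircle (1:ℝ))) = AddCircle.haarAddCircle := by
    rw [AddCircle.volume_eq_smul_haarAddCircle]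
    norm_num
  have hGmemH : MemLp G 2 (AddCircle.haarAddCircle : Measure (AddCircle (1:ℝ))) := by
    rwa [hvol] at hGmem
  -- Fourier coefficients of G vanish
  have hcoeff : ∀ k : ℤ, fourierCoeff G k = 0 := by
    intro k
    rw [fourierCoeff_eq_intervalIntegral G k (-(1:ℝ)/2)]
    have : (∫ x in (-(1:ℝ)/2)..(-(1:ℝ)/2 + 1), fourier (-k) (x : AddCircle (1:ℝ)) • G ↑x) = 0 := by
      rw [intervalIntegral.integral_of_le (by norm_num : (-(1:ℝ)/2) ≤ -(1:ℝ)/2 + 1)]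
      rw [← h' k]
      rw [I1_eq]
      refine setIntegral_congr_fun measurableSet_Ioc fun x hx => ?_
      rw [smul_eq_mul]
      congr 1
      apply hGg'
      rwa [I1_eq]
    rw [this, smul_zero]
  -- conclude G = 0 a.e.
  have hG0 : G =ᵐ[(AddCircle.haarAddCircle : Measure (AddCircle (1:ℝ)))] 0 := by
    have hz0 : MemLp (0 : AddCircle (1:ℝ) → ℂ) 2
        (AddCircle.haarAddCircle : Measure (AddCircle (1:ℝ))) := MemLp.zero
    refine (MemLp.toLp_eq_toLp_iff hGmemH hz0).mp ?_
    rw [hz0.toLp_zero]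
    apply (fourierBasis (T := 1)).repr.injective
    rw [map_zero]
    ext k
    rw [fourierBasis_repr]
    have : fourierCoeff (↑(hGmemH.toLp G) : AddCircle (1:ℝ) → ℂ) k = fourierCoeff G k := by
      refine integral_congr_ae ?_
      filter_upwards [hGmemH.coeFn_toLp] with t ht
      rw [ht]
    rw [this, hcoeff k]
    rfl
  have hG0v : G =ᵐ[(volume : Measure (AddCircle (1:ℝ)))] 0 := by rwa [hvol]
  have : (fun x : ℝ => G ↑x) =ᵐ[μ1] (fun _ => 0) := by
    rw [← mp_mk.map_eq] at hG0v
    exact (ae_eq_comp hmk.aemeasurable hG0v :)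
  exact hGcomp.symm.trans this

lemma key1d (g : ℝ → ℂ) (hg : MemLp g 2 μ1) (c : ℝ)
    (h : ∀ k : ℤ, ∫ x in I1, g x * Complex.exp (-(2*π*Complex.I) * ((c + k) * x)) = 0) :
    g =ᵐ[μ1] 0 := by
  set g₂ : ℝ → ℂ := fun x => g x * Complex.exp (-(2*π*Complex.I) * (c * x)) with hg₂def
  have hcont : Continuous fun x : ℝ => Complex.exp (-(2*π*Complex.I) * (c * x)) := by
    continuity
  have hnorm : ∀ x : ℝ, ‖g₂ x‖ = ‖g x‖ := by
    intro x
    rw [hg₂def]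
    simp only [norm_mul, Complex.norm_exp]
    have : (-(2*π*Complex.I) * (c * x)).re = 0 := by simp
    rw [this, Real.exp_zero, mul_one]
  have hg₂ : MemLp g₂ 2 μ1 := by
    refine MemLp.of_le hg (hg.aestronglyMeasurable.mul hcont.aestronglyMeasurable) ?_
    exact Filter.Eventually.of_forall fun x => le_of_eq (hnorm x)
  have hker : ∀ k : ℤ, ∀ x : ℝ, fourier (-k) (x : AddCircle (1:ℝ)) * g₂ x
      = g x * Complex.exp (-(2*π*Complex.I) * ((c + k) * x)) := by
    intro k x
    rw [hg₂def, fourier_coe_apply]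
    rw [mul_comm (Complex.exp _), mul_assoc, ← Complex.exp_add]
    congr 2
    push_cast
    ring
  have h2 : ∀ k : ℤ, ∫ x in I1, fourier (-k) (x : AddCircle (1:ℝ)) * g₂ x = 0 := by
    intro k
    rw [← h k]
    refine integral_congr_ae (Filter.Eventually.of_forall fun x => hker k x)
  have h0 := key_unique g₂ hg₂ h2
  filter_upwards [h0] with x hx
  have : g x * Complex.exp (-(2*π*Complex.I) * (c * x)) = 0 := hx
  rcases mul_eq_zero.mp this with h' | h'
  · exact h'
  · exact absurd h' (Complex.exp_ne_zero _)

lemma rpow_two_eq (a : ℝ) : a ^ (2:ℝ) = a ^ (2:ℕ) := by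
  rw [show (2:ℝ) = ((2:ℕ):ℝ) by norm_num, Real.rpow_natCast]

lemma memLp_int (h : ℝ × ℝ → ℂ) (hh : MemLp h 2 (μ1.prod μ1)) :
    MemLp (fun x => ∫ y, h (x, y) ∂μ1) 2 μ1 := by
  have hInt : Integrable h (μ1.prod μ1) := hh.integrable one_le_two
  have haesm : AEStronglyMeasurable (fun x => ∫ y, h (x, y) ∂μ1) μ1 :=
    hInt.aestronglyMeasurable.integral_prod_right'
  rw [memLp_two_iff_integrable_sq_norm haesm]
  have hsq : Integrable (fun p => ‖h p‖ ^ (2:ℕ)) (μ1.prod μ1) :=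
    (memLp_two_iff_integrable_sq_norm hh.aestronglyMeasurable).mp hh
  have hbig : Integrable (fun x => ∫ y, ‖h (x, y)‖ ^ (2:ℕ) ∂μ1) μ1 := hsq.integral_prod_left
  refine Integrable.mono hbig ?_ ?_
  · have := (haesm.norm.mul haesm.norm)
    refine this.congr (Filter.Eventually.of_forall fun x => ?_)
    simp [pow_two]
  · filter_upwards [hsq.prod_right_ae, hInt.prod_right_ae,
      hh.aestronglyMeasurable.prodMk_left] with x hx2 hx1 hxm
    have h1 : ‖∫ y, h (x, y) ∂μ1‖ ≤ ∫ y, ‖h (x, y)‖ ∂μ1 := norm_integral_le_integral_norm _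
    have hmem2 : MemLp (fun y => h (x, y)) 2 μ1 :=
      (memLp_two_iff_integrable_sq_norm hxm).mpr hx2
    have hpq : Real.HolderConjugate 2 2 :=
      Real.holderConjugate_iff_eq_conjExponent (by norm_num) |>.mpr (by norm_num)
    have hof : (ENNReal.ofReal (2:ℝ)) = 2 := by norm_num
    have hcs := integral_mul_le_Lp_mul_Lq_of_nonneg (μ := μ1) hpq
      (f := fun y => ‖h (x, y)‖) (g := fun _ => (1:ℝ))
      (Filter.Eventually.of_forall fun y => norm_nonneg (h (x, y)))
      (Filter.Eventually.of_forall fun _ => zero_le_one)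
      (by rw [hof]; exact hmem2.norm) (by rw [hof]; exact memLp_const 1)
    simp only [mul_one] at hcs
    have hone : (∫ _y, (1:ℝ) ^ (2:ℝ) ∂μ1) ^ ((1:ℝ)/2) = 1 := by
      simp
    rw [hone, mul_one] at hcs
    have hrw : (∫ y, ‖h (x, y)‖ ^ (2:ℝ) ∂μ1) = ∫ y, ‖h (x, y)‖ ^ (2:ℕ) ∂μ1 :=
      integral_congr_ae (Filter.Eventually.of_forall fun y => rpow_two_eq _)
    rw [hrw] at hcs
    have hnn : (0:ℝ) ≤ ∫ y, ‖h (x, y)‖ ^ (2:ℕ) ∂μ1 :=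
      integral_nonneg fun y => by positivity
    have h3 : ‖∫ y, h (x, y) ∂μ1‖ ^ (2:ℕ) ≤ ∫ y, ‖h (x, y)‖ ^ (2:ℕ) ∂μ1 := by
      calc ‖∫ y, h (x, y) ∂μ1‖ ^ (2:ℕ)
          ≤ ((∫ y, ‖h (x, y)‖ ^ (2:ℕ) ∂μ1) ^ ((1:ℝ)/2)) ^ (2:ℕ) := by
            apply pow_le_pow_left₀ (norm_nonneg _)
            exact h1.trans hcs
        _ = ∫ y, ‖h (x, y)‖ ^ (2:ℕ) ∂μ1 := by
            rw [← rpow_two_eq, ← Real.rpow_mul hnn]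
            norm_num
    calc ‖‖∫ y, h (x, y) ∂μ1‖ ^ (2:ℕ)‖ = ‖∫ y, h (x, y) ∂μ1‖ ^ (2:ℕ) := by
          rw [Real.norm_of_nonneg (by positivity)]
      _ ≤ ∫ y, ‖h (x, y)‖ ^ (2:ℕ) ∂μ1 := h3
      _ ≤ ‖∫ y, ‖h (x, y)‖ ^ (2:ℕ) ∂μ1‖ := le_abs_self _

lemma ρ_eq : volume.restrict Qsq = μ1.prod μ1 := by
  rw [Qsq, Measure.volume_eq_prod, ← Measure.prod_restrict]
  rw [μ1, I1, restrict_Ioc_eq_restrict_Icc]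

lemma norm_exp_eq_one (z : ℂ) (hz : z.re = 0) : ‖Complex.exp z‖ = 1 := by
  rw [Complex.norm_exp, hz, Real.exp_zero]

lemma spectrumA_complete (s : ℤ → ℝ) (t : ℝ)
    (f : ℝ × ℝ → ℂ) (hf : MemLp f 2 (μ1.prod μ1))
    (h : ∀ n k : ℤ, ∫ p, f p *
      Complex.exp (-(2*π*Complex.I) * ((s k + n) * p.1 + (t + k) * p.2)) ∂(μ1.prod μ1) = 0) :
    f =ᵐ[μ1.prod μ1] 0 := by
  set F : ℤ → ℝ → ℂ :=
    fun k x => ∫ y, f (x, y) * Complex.exp (-(2*π*Complex.I) * ((t + k) * y)) ∂μ1 with hF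
  -- each F k is in L²
  have step1 : ∀ k : ℤ, MemLp (F k) 2 μ1 := by
    intro k
    have hmem : MemLp (fun p : ℝ × ℝ =>
        f p * Complex.exp (-(2*π*Complex.I) * ((t + k) * p.2))) 2 (μ1.prod μ1) := by
      have hcont : Continuous fun p : ℝ × ℝ =>
          Complex.exp (-(2*π*Complex.I) * ((t + k) * p.2)) := by
        fun_prop
      refine MemLp.of_le hf (hf.aestronglyMeasurable.mul hcont.aestronglyMeasurable) ?_
      refine Filter.Eventually.of_forall fun p => ?_
      simp only [Pi.mul_apply, norm_mul]
      rw [norm_exp_eq_one _ (by simp), mul_one]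
    have := memLp_int (fun p : ℝ × ℝ =>
      f p * Complex.exp (-(2*π*Complex.I) * ((t + k) * p.2))) hmem
    exact this
  -- Fourier coefficients of F k vanish
  have step2 : ∀ k n : ℤ, ∫ x, F k x *
      Complex.exp (-(2*π*Complex.I) * ((s k + n) * x)) ∂μ1 = 0 := by
    intro k n
    have hcont : Continuous fun p : ℝ × ℝ =>
        Complex.exp (-(2*π*Complex.I) * ((s k + n) * p.1 + (t + k) * p.2)) := by
      fun_prop
    have hInt : Integrable (fun p : ℝ × ℝ => f p *
        Complex.exp (-(2*π*Complex.I) * ((s k + n) * p.1 + (t + k) * p.2))) (μ1.prod μ1) := by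
      refine (MemLp.of_le hf (hf.aestronglyMeasurable.mul hcont.aestronglyMeasurable) ?_).integrable one_le_two
      refine Filter.Eventually.of_forall fun p => ?_
      simp only [Pi.mul_apply, norm_mul]
      rw [norm_exp_eq_one _ (by simp), mul_one]
    have hfub := MeasureTheory.integral_prod (fun p : ℝ × ℝ => f p *
        Complex.exp (-(2*π*Complex.I) * ((s k + n) * p.1 + (t + k) * p.2))) hInt
    rw [h n k] at hfub
    dsimp only at hfub
    refine Eq.trans ?_ hfub.symm
    refine integral_congr_ae (Filter.Eventually.of_forall fun x => ?_)
    dsimp only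
    have hsplit : ∀ y : ℝ, f (x, y) *
        Complex.exp (-(2*π*Complex.I) * ((s k + n) * x + (t + k) * y))
        = Complex.exp (-(2*π*Complex.I) * ((s k + n) * x)) *
          (f (x, y) * Complex.exp (-(2*π*Complex.I) * ((t + k) * y))) := by
      intro y
      rw [show (-(2*π*Complex.I) * ((s k + n) * x + (t + k) * y))
          = (-(2*π*Complex.I) * ((s k + n) * x)) + (-(2*π*Complex.I) * ((t + k) * y)) by ring]
      rw [Complex.exp_add]
      ring
    have h2 : (∫ y, f (x, y) *
        Complex.exp (-(2*π*Complex.I) * ((s k + n) * x + (t + k) * y)) ∂μ1)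
        = ∫ y, Complex.exp (-(2*π*Complex.I) * ((s k + n) * x)) *
            (f (x, y) * Complex.exp (-(2*π*Complex.I) * ((t + k) * y))) ∂μ1 :=
      integral_congr_ae (Filter.Eventually.of_forall hsplit)
    rw [h2, integral_const_mul, mul_comm, hF]
  -- kill each F k
  have step3 : ∀ k : ℤ, F k =ᵐ[μ1] 0 := by
    intro k
    apply key1d (F k) (step1 k) (s k)
    intro n
    exact step2 k n
  have step4 : ∀ᵐ x ∂μ1, ∀ k : ℤ, F k x = 0 := by
    rw [ae_all_iff]
    intro k
    exact step3 k
  -- a.e. section is L²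
  have hsq : Integrable (fun p => ‖f p‖ ^ (2:ℕ)) (μ1.prod μ1) :=
    (memLp_two_iff_integrable_sq_norm hf.aestronglyMeasurable).mp hf
  have step5 : ∀ᵐ x ∂μ1, MemLp (fun y => f (x, y)) 2 μ1 := by
    filter_upwards [hsq.prod_right_ae, hf.aestronglyMeasurable.prodMk_left] with x hx2 hxm
    exact (memLp_two_iff_integrable_sq_norm hxm).mpr hx2
  -- kill the sections
  have step6 : ∀ᵐ x ∂μ1, (fun y => f (x, y)) =ᵐ[μ1] 0 := by
    filter_upwards [step4, step5] with x hx4 hx5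
    apply key1d (fun y => f (x, y)) hx5 t
    intro k
    exact hx4 k
  -- assemble
  set f' : ℝ × ℝ → ℂ := hf.aestronglyMeasurable.mk f with hf'def
  have hff' : f =ᵐ[μ1.prod μ1] f' := hf.aestronglyMeasurable.ae_eq_mk
  have hsec : ∀ᵐ x ∂μ1, (fun y => f (x, y)) =ᵐ[μ1] (fun y => f' (x, y)) :=
    Measure.ae_ae_eq_curry_of_prod hff'
  have step6' : ∀ᵐ x ∂μ1, (fun y => f' (x, y)) =ᵐ[μ1] 0 := by
    filter_upwards [step6, hsec] with x h6 hs
    exact hs.symm.trans h6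
  have hS : MeasurableSet {p : ℝ × ℝ | f' p ≠ 0} := by
    have : {p : ℝ × ℝ | f' p ≠ 0} = f' ⁻¹' ({0}ᶜ) := rfl
    rw [this]
    exact hf.aestronglyMeasurable.stronglyMeasurable_mk.measurable
      (measurableSet_singleton 0).compl
  have hnull : (μ1.prod μ1) {p : ℝ × ℝ | f' p ≠ 0} = 0 := by
    rw [Measure.measure_prod_null hS]
    filter_upwards [step6'] with x hx
    have : Prod.mk x ⁻¹' {p : ℝ × ℝ | f' p ≠ 0} = {y | f' (x, y) ≠ 0} := rfl
    rw [this]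
    exact hx
  have hf'0 : f' =ᵐ[μ1.prod μ1] 0 := by
    rw [Filter.eventuallyEq_iff_exists_mem]
    refine ⟨{p : ℝ × ℝ | f' p ≠ 0}ᶜ, ?_, fun p hp => not_not.mp hp⟩
    rw [mem_ae_iff, compl_compl]
    exact hnull
  exact hff'.trans hf'0

lemma orth_mono {Λ Γ : Set (ℝ × ℝ)} (hsub : Λ ⊆ Γ) (h : IsOrthoSq Γ) : IsOrthoSq Λ :=
  fun l hl m hm hne => h l (hsub hl) m (hsub hm) hne

lemma spectrumA (s : ℤ → ℝ) (t : ℝ) :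
    IsSpectrumSq {p : ℝ × ℝ | ∃ n k : ℤ, p = (s k + n, t + k)} := by
  constructor
  · rintro l ⟨n, k, rfl⟩ m ⟨n', k', rfl⟩ hne
    by_cases hk : k = k'
    · subst hk
      left
      refine ⟨n - n', ?_, by push_cast; ring⟩
      intro h0
      apply hne
      have : n = n' := by omega
      subst this
      rfl
    · right
      refine ⟨k - k', by omega, by push_cast; ring⟩
  · intro f hf hint
    have hf' : MemLp f 2 (μ1.prod μ1) := by rwa [ρ_eq] at hf
    have h0 : f =ᵐ[μ1.prod μ1] 0 := by
      apply spectrumA_complete s t f hf'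
      intro n k
      have hl : ((s k + n : ℝ), (t + k : ℝ)) ∈
          {p : ℝ × ℝ | ∃ n k : ℤ, p = (s k + n, t + k)} := ⟨n, k, rfl⟩
      have := hint _ hl
      rw [ρ_eq] at this
      rw [← this]
      refine integral_congr_ae (Filter.Eventually.of_forall fun p => ?_)
      push_cast
      ring_nf
    rwa [ρ_eq]

lemma Qsq_meas : MeasurableSet Qsq := by
  rw [Qsq]; exact measurableSet_Icc.prod measurableSet_Icc

lemma swap_pre : Prod.swap ⁻¹' Qsq = Qsq := by
  ext p
  rw [Qsq]
  constructor
  · rintro ⟨h1, h2⟩; exact ⟨h2, h1⟩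
  · rintro ⟨h1, h2⟩; exact ⟨h2, h1⟩

lemma mp_swap : MeasurePreserving Prod.swap
    (volume.restrict Qsq) (volume.restrict Qsq) := by
  have mp0 : MeasurePreserving (Prod.swap : ℝ × ℝ → ℝ × ℝ) volume volume := by
    rw [Measure.volume_eq_prod]
    exact Measure.measurePreserving_swap
  refine ⟨measurable_swap, ?_⟩
  calc Measure.map Prod.swap (volume.restrict Qsq)
      = Measure.map Prod.swap (volume.restrict (Prod.swap ⁻¹' Qsq)) := by rw [swap_pre]
    _ = (Measure.map Prod.swap volume).restrict Qsq :=
        (Measure.restrict_map measurable_swap Qsq_meas).symm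
    _ = volume.restrict Qsq := by rw [mp0.map_eq]

lemma swap_spectrum (Γ : Set (ℝ × ℝ)) (h : IsSpectrumSq Γ) :
    IsSpectrumSq (Prod.swap '' Γ) := by
  constructor
  · rintro l ⟨l', hl', rfl⟩ m ⟨m', hm', rfl⟩ hne
    have hne' : l' ≠ m' := fun he => hne (by rw [he])
    rcases h.1 l' hl' m' hm' hne' with ⟨k, hk0, hk⟩ | ⟨k, hk0, hk⟩
    · right; exact ⟨k, hk0, hk⟩
    · left; exact ⟨k, hk0, hk⟩
  · intro f hf hint
    have hfs : MemLp (f ∘ Prod.swap) 2 (volume.restrict Qsq) := by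
      have h1 : MemLp f 2 (Measure.map Prod.swap (volume.restrict Qsq)) := by
        rw [mp_swap.map_eq]; exact hf
      exact (memLp_map_measure_iff (by rw [mp_swap.map_eq]; exact hf.aestronglyMeasurable)
        measurable_swap.aemeasurable).mp h1
    have hint' : ∀ l ∈ Γ, (∫ x in Qsq, (f ∘ Prod.swap) x *
        Complex.exp (-(2 * π * Complex.I) * (l.1 * x.1 + l.2 * x.2))) = 0 := by
      intro l hl
      have hcomp := mp_swap.integral_comp
        (MeasurableEquiv.prodComm : ℝ × ℝ ≃ᵐ ℝ × ℝ).measurableEmbedding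
        (fun y : ℝ × ℝ => f y * Complex.exp (-(2 * π * Complex.I) * (l.1 * y.2 + l.2 * y.1)))
      have hswapmem : (l.2, l.1) ∈ Prod.swap '' Γ := ⟨l, hl, rfl⟩
      have hz := hint _ hswapmem
      calc (∫ x in Qsq, (f ∘ Prod.swap) x *
            Complex.exp (-(2 * π * Complex.I) * (l.1 * x.1 + l.2 * x.2)))
          = ∫ x in Qsq, (fun y : ℝ × ℝ => f y *
              Complex.exp (-(2 * π * Complex.I) * (l.1 * y.2 + l.2 * y.1)))
              ((MeasurableEquiv.prodComm : ℝ × ℝ ≃ᵐ ℝ × ℝ) x) := by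
            refine integral_congr_ae (Filter.Eventually.of_forall fun x => ?_)
            rfl
        _ = ∫ y in Qsq, f y * Complex.exp (-(2 * π * Complex.I) * (l.1 * y.2 + l.2 * y.1)) :=
            hcomp
        _ = ∫ y in Qsq, f y * Complex.exp (-(2 * π * Complex.I) * (l.2 * y.1 + l.1 * y.2)) := by
            refine integral_congr_ae (Filter.Eventually.of_forall fun y => ?_)
            ring_nf
        _ = 0 := hz
    have h0 : (f ∘ Prod.swap) =ᵐ[volume.restrict Qsq] 0 := h.2 (f ∘ Prod.swap) hfs hint'
    have h0' : (f ∘ Prod.swap) =ᵐ[Measure.map Prod.swap (volume.restrict Qsq)] 0 := by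
      rwa [mp_swap.map_eq]
    have := ae_eq_comp measurable_swap.aemeasurable h0'
    exact this

lemma structure_cases (Λ : Set (ℝ × ℝ)) (horth : IsOrthoSq Λ) :
    (∃ t : ℝ, ∀ l ∈ Λ, ∃ k : ℤ, l.2 = t + k) ∨ (∃ s : ℝ, ∀ l ∈ Λ, ∃ n : ℤ, l.1 = s + n) := by
  rcases Set.eq_empty_or_nonempty Λ with hΛ | ⟨l₀, hl₀⟩
  · left; exact ⟨0, by simp [hΛ]⟩
  by_cases hA : ∀ m ∈ Λ, ∃ n : ℤ, m.1 - l₀.1 = n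
  · right
    refine ⟨l₀.1, fun l hl => ?_⟩
    obtain ⟨n, hn⟩ := hA l hl
    exact ⟨n, by linarith⟩
  · push_neg at hA
    obtain ⟨m₀, hm₀, hm₀'⟩ := hA
    left
    refine ⟨l₀.2, fun l hl => ?_⟩
    have hm₀l₀ : m₀ ≠ l₀ := by
      intro he
      exact hm₀' 0 (by rw [he]; simp)
    have hk₂ : ∃ k : ℤ, l₀.2 - m₀.2 = k := by
      rcases horth l₀ hl₀ m₀ hm₀ (Ne.symm hm₀l₀) with ⟨k, hk0, hk⟩ | ⟨k, hk0, hk⟩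
      · exact absurd (by push_cast; linarith : m₀.1 - l₀.1 = ((-k : ℤ) : ℝ)) (hm₀' (-k))
      · exact ⟨k, hk⟩
    obtain ⟨k₂, hk₂⟩ := hk₂
    by_cases hl1 : ∃ n : ℤ, l.1 - l₀.1 = n
    · obtain ⟨n, hn⟩ := hl1
      have hlm₀ : l ≠ m₀ := by
        intro he
        subst he
        exact hm₀' n hn
      have hk₁ : ∃ k : ℤ, l.2 - m₀.2 = k := by
        rcases horth l hl m₀ hm₀ hlm₀ with ⟨k, hk0, hk⟩ | ⟨k, hk0, hk⟩
        · exfalso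
          refine hm₀' (n - k) ?_
          push_cast
          linarith
        · exact ⟨k, hk⟩
      obtain ⟨k₁, hk₁⟩ := hk₁
      exact ⟨k₁ - k₂, by push_cast; linarith⟩
    · have hll₀ : l ≠ l₀ := by
        intro he
        subst he
        exact hl1 ⟨0, by simp⟩
      rcases horth l hl l₀ hl₀ hll₀ with ⟨k, hk0, hk⟩ | ⟨k, hk0, hk⟩
      · exact absurd ⟨k, by linarith⟩ hl1
      · exact ⟨k, by linarith⟩


/-- Any orthogonal set for the unit square embeds in a spectrum; in particular
any maximal orthogonal set is a spectrum. -/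
theorem stmt_7 (Λ : Set (ℝ × ℝ)) (horth : IsOrthoSq Λ) :
    (∃ Γ : Set (ℝ × ℝ), Λ ⊆ Γ ∧ IsSpectrumSq Γ) ∧
      ((∀ s ∉ Λ, ¬ IsOrthoSq (insert s Λ)) → IsSpectrumSq Λ) := by
  have main : ∃ Γ : Set (ℝ × ℝ), Λ ⊆ Γ ∧ IsSpectrumSq Γ := by
    classical
    rcases structure_cases Λ horth with ⟨t, ht⟩ | ⟨s0, hs⟩
    · -- all second coordinates in t + ℤ
      set sfun : ℤ → ℝ := fun k =>
        if h : ∃ l ∈ Λ, l.2 = t + k then h.choose.1 else 0 with hsfun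
      refine ⟨{p : ℝ × ℝ | ∃ n k : ℤ, p = (sfun k + n, t + k)}, ?_, spectrumA sfun t⟩
      intro l hl
      obtain ⟨k, hk⟩ := ht l hl
      have hex : ∃ l' ∈ Λ, l'.2 = t + k := ⟨l, hl, hk⟩
      have hsk : sfun k = hex.choose.1 := dif_pos hex
      obtain ⟨hm, hm2⟩ := hex.choose_spec
      set m := hex.choose
      have hn : ∃ n : ℤ, l.1 - m.1 = n := by
        by_cases hlm : l = m
        · exact ⟨0, by rw [hlm]; simp⟩
        · rcases horth l hl m hm hlm with ⟨n, _, hn⟩ | ⟨n, hn0, hn⟩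
          · exact ⟨n, hn⟩
          · exfalso
            rw [hk, hm2] at hn
            simp at hn
            exact hn0 (by exact_mod_cast hn.symm)
      obtain ⟨n, hn⟩ := hn
      refine ⟨n, k, ?_⟩
      have : l = (l.1, l.2) := rfl
      rw [this, hk, hsk]
      congr 1
      linarith
    · -- all first coordinates in s0 + ℤ
      set tfun : ℤ → ℝ := fun k =>
        if h : ∃ l ∈ Λ, l.1 = s0 + k then h.choose.2 else 0 with htfun
      refine ⟨Prod.swap '' {p : ℝ × ℝ | ∃ n k : ℤ, p = (tfun k + n, s0 + k)}, ?_,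
        swap_spectrum _ (spectrumA tfun s0)⟩
      intro l hl
      obtain ⟨k, hk⟩ := hs l hl
      have hex : ∃ l' ∈ Λ, l'.1 = s0 + k := ⟨l, hl, hk⟩
      have htk : tfun k = hex.choose.2 := dif_pos hex
      obtain ⟨hm, hm1⟩ := hex.choose_spec
      set m := hex.choose
      have hn : ∃ n : ℤ, l.2 - m.2 = n := by
        by_cases hlm : l = m
        · exact ⟨0, by rw [hlm]; simp⟩
        · rcases horth l hl m hm hlm with ⟨n, hn0, hn⟩ | ⟨n, _, hn⟩
          · exfalso
            rw [hk, hm1] at hn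
            simp at hn
            exact hn0 (by exact_mod_cast hn.symm)
          · exact ⟨n, hn⟩
      obtain ⟨n, hn⟩ := hn
      refine ⟨(l.2, l.1), ⟨n, k, ?_⟩, rfl⟩
      rw [htk]
      have h1 : l.1 = s0 + k := hk
      have h2 : l.2 = m.2 + n := by linarith
      rw [Prod.ext_iff]
      exact ⟨by simpa using h2, by simpa using h1⟩
  refine ⟨main, fun hmax => ?_⟩
  obtain ⟨Γ, hsub, hspec⟩ := main
  have hΛΓ : Λ = Γ := by
    refine Set.Subset.antisymm hsub ?_
    intro x hx
    by_contra hxΛ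
    exact hmax x hxΛ (orth_mono (Set.insert_subset hx hsub) hspec.1)
  rw [hΛΓ]
  exact hspec
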